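/- Let g be an invertible symmetric 4×4 real matrix, let h be a symmetric 4×4 real matrix, and set f = (1/2)·g⁻¹ * h. For ε ∈ ℝ near 0 set F(ε) = 1 + ε·f. For each k ∈ Fin 4 define the deformed Dirac γ-field component γ̂_k(ε) = Σ_{q ∈ Fin 4} (F(ε)⁻¹)^q_k · m_q, a 4×4 complex matrix. Then ε ↦ γ̂_k(ε) is differentiable at ε = 0 with derivative −(1/2) Σ_{p,q ∈ Fin 4} (g⁻¹)^{qp} h_{pk} · m_q. (This is the variation δγ^a_{bk} = −(1/2) Σ_{p,q} g^{pq} γ^a_{bq} ε h_{pk} of the Dirac γ-field under the metric deformation.) -/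

import Mathlib

open Matrix

/-- The four Dirac matrices `m₀, m₁, m₂, m₃`, the components of the Dirac `γ`-field
in a canonically associated frame pair. -/
noncomputable def diracMat : Fin 4 → Matrix (Fin 4) (Fin 4) ℂ :=
  ![!![0, 0, 1, 0; 0, 0, 0, 1; 1, 0, 0, 0; 0, 1, 0, 0],
    !![0, 0, 0, 1; 0, 0, 1, 0; 0, -1, 0, 0; -1, 0, 0, 0],
    !![0, 0, 0, -Complex.I; 0, 0, Complex.I, 0; 0, Complex.I, 0, 0; -Complex.I, 0, 0, 0],
    !![0, 0, 1, 0; 0, 0, 0, -1; -1, 0, 0, 0; 0, 1, 0, 0]]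

/-- The deformation operator `F ε = 1 + ε • ((1/2) • (g⁻¹ * h))`. -/
noncomputable def deformOp (g h : Matrix (Fin 4) (Fin 4) ℝ) (ε : ℝ) :
    Matrix (Fin 4) (Fin 4) ℝ :=
  1 + ε • ((1/2 : ℝ) • (g⁻¹ * h))

/-- The deformed Dirac `γ`-field components `γ̂_k ε = ∑_q ((F ε)⁻¹)^q_k • m_q` in the
deformed frame pair. -/
noncomputable def gammaHat (g h : Matrix (Fin 4) (Fin 4) ℝ) (k : Fin 4) (ε : ℝ) :
    Matrix (Fin 4) (Fin 4) ℂ :=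
  ∑ q : Fin 4, (((deformOp g h ε)⁻¹ q k : ℝ) : ℂ) • diracMat q

attribute [local instance] Matrix.linftyOpNormedRing Matrix.linftyOpNormedAlgebra

/-- Entrywise derivative of `(1 + ε • c)⁻¹` at `ε = 0` is `-c`. -/
lemma matrix_inv_entry_deriv (c : Matrix (Fin 4) (Fin 4) ℝ) (q k : Fin 4) :
    HasDerivAt (fun ε : ℝ => (1 + ε • c)⁻¹ q k) (-(c q k)) 0 := by
  have hF : HasDerivAt (fun ε : ℝ => (1 : Matrix (Fin 4) (Fin 4) ℝ) + ε • c) c 0 := by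
    have := ((hasDerivAt_id (0 : ℝ)).smul_const c).const_add (1 : Matrix (Fin 4) (Fin 4) ℝ)
    simp only [id, one_smul] at this
    exact this
  have hinv := hasFDerivAt_ringInverse (𝕜 := ℝ) (1 : (Matrix (Fin 4) (Fin 4) ℝ)ˣ)
  simp only [inv_one, Units.val_one] at hinv
  have hinv' : HasFDerivAt (Ring.inverse : Matrix (Fin 4) (Fin 4) ℝ → _)
      (-ContinuousLinearMap.mulLeftRight ℝ (Matrix (Fin 4) (Fin 4) ℝ) 1 1)
      ((1 : Matrix (Fin 4) (Fin 4) ℝ) + (0 : ℝ) • c) := by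
    rw [show (1 : Matrix (Fin 4) (Fin 4) ℝ) + (0 : ℝ) • c = 1 by simp]
    exact hinv
  have hcomp := hinv'.comp_hasDerivAt 0 hF
  have hval : (-ContinuousLinearMap.mulLeftRight ℝ (Matrix (Fin 4) (Fin 4) ℝ)
      1 1) c = -c := by simp
  rw [hval] at hcomp
  -- project onto the (q, k) entry
  have hentry := ((Matrix.entryLinearMap ℝ ℝ q k).toContinuousLinearMap.hasFDerivAt
    ).comp_hasDerivAt 0 hcomp
  have : HasDerivAt (fun ε : ℝ => Ring.inverse ((1 : Matrix (Fin 4) (Fin 4) ℝ) + ε • c) q k)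
      (-(c q k)) 0 := by
    exact hentry
  simpa only [Matrix.nonsing_inv_eq_ringInverse] using this

/-- Under the metric deformation by `F ε = 1 + ε • ((1/2) • (g⁻¹ * h))`, the
deformed Dirac `γ`-field components `γ̂_k ε = ∑_q ((F ε)⁻¹)^q_k • m_q` are differentiable
(entrywise) at `ε = 0` with derivative `-(1/2) ∑_{p,q} (g⁻¹)^{qp} h_{pk} • m_q`. -/
theorem dirac_gamma_field_variation
    (g h : Matrix (Fin 4) (Fin 4) ℝ)
    (hginv : IsUnit g.det) (hgsymm : g.IsSymm) (hhsymm : h.IsSymm) :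
    ∀ k : Fin 4, ∀ a b : Fin 4,
      HasDerivAt (fun ε : ℝ => gammaHat g h k ε a b)
        ((-(1/2 : ℂ) • ∑ p : Fin 4, ∑ q : Fin 4,
            ((g⁻¹ q p * h p k : ℝ) : ℂ) • diracMat q) a b)
        0 := by
  have key := matrix_inv_entry_deriv ((1/2 : ℝ) • (g⁻¹ * h))
  intro k a b
  have h1 : ∀ q : Fin 4,
      HasDerivAt (fun ε : ℝ => (((deformOp g h ε)⁻¹ q k : ℝ) : ℂ) * diracMat q a b)
        ((-(((1/2 : ℝ) • (g⁻¹ * h)) q k) : ℂ) * diracMat q a b) 0 := by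
    intro q
    have := ((key q k).ofReal_comp).mul_const (diracMat q a b)
    simpa [deformOp] using this
  have h2 := HasDerivAt.fun_sum (fun q (_ : q ∈ Finset.univ) => h1 q)
  have e1 : (fun ε : ℝ => ∑ q : Fin 4,
      (((deformOp g h ε)⁻¹ q k : ℝ) : ℂ) * diracMat q a b)
      = fun ε : ℝ => gammaHat g h k ε a b := by
    funext ε
    simp [gammaHat, Matrix.sum_apply, Matrix.smul_apply, smul_eq_mul]
  rw [e1] at h2
  convert h2 using 1
  case e'_4 => rfl
  simp only [Matrix.smul_apply, Matrix.sum_apply, Matrix.smul_apply, smul_eq_mul,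
    Finset.mul_sum, Matrix.smul_apply, Matrix.mul_apply, Matrix.smul_apply]
  rw [Finset.sum_comm]
  refine Finset.sum_congr rfl fun q _ => ?_
  push_cast
  rw [neg_mul, Finset.sum_mul, ← Finset.sum_neg_distrib]
  exact Finset.sum_congr rfl fun x _ => by ring
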